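/- Let f_i be convex differentiable with L-Lipschitz gradient and g_i convex, F_i = f_i + g_i, i = 1,…,m. Let x_{k+1} minimize φ_{1/s_k}(·; x_k, y_k) with 0 < s_k ≤ 1/L, and suppose the KKT conditions hold with multipliers λ ∈ Δ^m and subgradients g̃_i ∈ ∂g_i(x_{k+1}) satisfying ∑_i λ_i(∇f_i(y_k) + g̃_i) = −(1/s_k)(x_{k+1} − y_k). Then for every z ∈ ℝ^n, min_i (F_i(x_{k+1}) − F_i(z)) ≤ (1/(2s_k))[2⟨y_k − x_{k+1}, y_k − z⟩ − ‖x_{k+1} − y_k‖²]. -/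

import Mathlib

open InnerProductSpace

-- chain rule helper: derivative of t ↦ f (y + t • v)
lemma line_hasDerivAt {E : Type*} [NormedAddCommGroup E] [InnerProductSpace ℝ E]
    [CompleteSpace E] {f : E → ℝ} {f' : E → E}
    (hf : ∀ x, HasGradientAt f (f' x) x) (y v : E) (t : ℝ) :
    HasDerivAt (fun t : ℝ => f (y + t • v)) (inner ℝ (f' (y + t • v)) v : ℝ) t := by
  have hc : HasDerivAt (fun t : ℝ => y + t • v) v t := by
    simpa using ((hasDerivAt_id t).smul_const v).const_add y
  have hF : HasFDerivAt f (toDual ℝ E (f' (y + t • v))) (y + t • v) :=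
    (hf (y + t • v)).hasFDerivAt
  have := hF.comp_hasDerivAt t hc
  simp only [InnerProductSpace.toDual_apply_apply] at this; exact this

-- first order condition for a convex differentiable function
lemma convex_first_order {E : Type*} [NormedAddCommGroup E] [InnerProductSpace ℝ E]
    [CompleteSpace E] {f : E → ℝ} {f' : E → E}
    (hf : ∀ x, HasGradientAt f (f' x) x) (hconv : ConvexOn ℝ Set.univ f) (y z : E) :
    f y + (inner ℝ (f' y) (z - y) : ℝ) ≤ f z := by
  set v := z - y with hv
  set h : ℝ → ℝ := fun t => f (y + t • v) with hh
  have hd : HasDerivAt h (inner ℝ (f' y) v : ℝ) 0 := by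
    have := line_hasDerivAt hf y v 0
    simpa using this
  have hslope : Filter.Tendsto (slope h 0) (nhdsWithin 0 (Set.Ioi 0))
      (nhds (inner ℝ (f' y) v : ℝ)) := by
    have := hasDerivAt_iff_tendsto_slope.mp hd
    exact this.mono_left (nhdsWithin_mono _ (fun t ht => ne_of_gt ht))
  have hbound : ∀ t ∈ Set.Ioc (0:ℝ) 1, slope h 0 t ≤ f z - f y := by
    intro t ht
    have h1 : h t ≤ (1 - t) * f y + t * f z := by
      have := hconv.2 (Set.mem_univ y) (Set.mem_univ z)
        (by linarith [ht.2] : (0:ℝ) ≤ 1 - t) (le_of_lt ht.1) (by ring)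
      have heq : (1 - t) • y + t • z = y + t • v := by
        rw [hv]; module
      simpa [hh, heq, smul_eq_mul] using this
    have h0 : h 0 = f y := by simp [hh]
    rw [slope_def_field]
    rw [sub_zero, div_le_iff₀ ht.1]
    nlinarith [h1, h0, ht.2]
  have : (inner ℝ (f' y) v : ℝ) ≤ f z - f y := by
    refine le_of_tendsto hslope ?_
    filter_upwards [Ioc_mem_nhdsGT_of_mem (by norm_num : (0:ℝ) ∈ Set.Ico (0:ℝ) 1)] with t ht
    exact hbound t ht
  linarith

-- descent lemma
lemma descent_lemma {E : Type*} [NormedAddCommGroup E] [InnerProductSpace ℝ E]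
    [CompleteSpace E] {f : E → ℝ} {f' : E → E} {L : ℝ} (hL : 0 ≤ L)
    (hf : ∀ x, HasGradientAt f (f' x) x)
    (hlip : ∀ x y, ‖f' x - f' y‖ ≤ L * ‖x - y‖) (x y : E) :
    f x ≤ f y + (inner ℝ (f' y) (x - y) : ℝ) + L / 2 * ‖x - y‖ ^ 2 := by
  set v := x - y with hv
  set G : ℝ → ℝ := fun t => f (y + t • v) - t * (inner ℝ (f' y) v : ℝ) - L / 2 * t ^ 2 * ‖v‖ ^ 2
    with hG
  have hder : ∀ t : ℝ, HasDerivAt G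
      ((inner ℝ (f' (y + t • v)) v : ℝ) - (inner ℝ (f' y) v : ℝ) - L * t * ‖v‖ ^ 2) t := by
    intro t
    have h1 := line_hasDerivAt hf y v t
    have h2 : HasDerivAt (fun t : ℝ => t * (inner ℝ (f' y) v : ℝ)) (inner ℝ (f' y) v : ℝ) t := by
      simpa using (hasDerivAt_id t).mul_const (inner ℝ (f' y) v : ℝ)
    have h3 : HasDerivAt (fun t : ℝ => L / 2 * t ^ 2 * ‖v‖ ^ 2) (L * t * ‖v‖ ^ 2) t := by
      have := ((hasDerivAt_pow 2 t).const_mul (L / 2)).mul_const (‖v‖ ^ 2)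
      refine this.congr_deriv ?_
      ring
    exact (h1.sub h2).sub h3
  have hanti : AntitoneOn G (Set.Icc 0 1) := by
    apply antitoneOn_of_deriv_nonpos (convex_Icc 0 1)
    · exact fun t _ => ((hder t).differentiableAt).continuousAt.continuousWithinAt
    · intro t ht
      exact ((hder t).differentiableAt).differentiableWithinAt
    · intro t ht
      rw [interior_Icc] at ht
      rw [(hder t).deriv]
      have hb : (inner ℝ (f' (y + t • v) - f' y) v : ℝ) ≤ L * t * ‖v‖ ^ 2 := by
        calc (inner ℝ (f' (y + t • v) - f' y) v : ℝ) ≤ ‖f' (y + t • v) - f' y‖ * ‖v‖ :=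
              real_inner_le_norm _ _
          _ ≤ (L * ‖(y + t • v) - y‖) * ‖v‖ := by
              apply mul_le_mul_of_nonneg_right (hlip _ _) (norm_nonneg _)
          _ = L * t * ‖v‖ ^ 2 := by
              have : ‖(y + t • v) - y‖ = t * ‖v‖ := by
                simp [norm_smul, abs_of_pos ht.1]
              rw [this]; ring
      rw [inner_sub_left] at hb
      linarith
  have := hanti (Set.mem_Icc.mpr ⟨le_refl 0, zero_le_one⟩)
    (Set.mem_Icc.mpr ⟨zero_le_one, le_refl 1⟩) zero_le_one
  have h0 : G 0 = f y := by simp [hG]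
  have h1 : G 1 = f x - (inner ℝ (f' y) v : ℝ) - L / 2 * ‖v‖ ^ 2 := by
    simp [hG, hv]
  rw [h0, h1] at this
  linarith

theorem stmt_18 (n m : ℕ) (hm : 0 < m) (L : ℝ) (hL : 0 < L)
    (f g : Fin m → EuclideanSpace ℝ (Fin n) → ℝ)
    (f' : Fin m → EuclideanSpace ℝ (Fin n) → EuclideanSpace ℝ (Fin n))
    (hf : ∀ i x, HasGradientAt (f i) (f' i x) x)
    (hfconv : ∀ i, ConvexOn ℝ Set.univ (f i))
    (hlip : ∀ i x y, ‖f' i x - f' i y‖ ≤ L * ‖x - y‖)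
    (hg : ∀ i, ConvexOn ℝ Set.univ (g i))
    (F : Fin m → EuclideanSpace ℝ (Fin n) → ℝ) (hF : ∀ i x, F i x = f i x + g i x)
    (s : ℝ) (hs0 : 0 < s) (hsL : s ≤ 1 / L)
    (xk yk x₁ : EuclideanSpace ℝ (Fin n))
    (φ : EuclideanSpace ℝ (Fin n) → ℝ)
    (hφ : ∀ z, φ z = (⨆ i : Fin m, ((inner ℝ (f' i yk) (z - yk) : ℝ) + g i z + f i yk - F i xk))
        + (1 / (2 * s)) * ‖z - yk‖ ^ 2)
    (hmin : ∀ w, φ x₁ ≤ φ w)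
    (lam : Fin m → ℝ) (hlam : ∀ i, 0 ≤ lam i) (hlamsum : ∑ i, lam i = 1)
    (gt : Fin m → EuclideanSpace ℝ (Fin n))
    (hsub : ∀ i w, g i x₁ + (inner ℝ (gt i) (w - x₁) : ℝ) ≤ g i w)
    (hkkt : ∑ i, lam i • (f' i yk + gt i) = -(1 / s) • (x₁ - yk)) :
    ∀ z : EuclideanSpace ℝ (Fin n),
      (⨅ i : Fin m, (F i x₁ - F i z)) ≤
        (1 / (2 * s)) * (2 * (inner ℝ (yk - x₁) (yk - z) : ℝ) - ‖x₁ - yk‖ ^ 2) := by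
  intro z
  haveI : Nonempty (Fin m) := ⟨⟨0, hm⟩⟩
  have hLs : L ≤ 1 / s := by
    rw [le_div_iff₀ hs0]
    calc L * s ≤ L * (1 / L) := by
          apply mul_le_mul_of_nonneg_left hsL (le_of_lt hL)
      _ = 1 := by field_simp
  -- key per-coordinate bound
  have key : ∀ i, F i x₁ - F i z ≤
      (inner ℝ (f' i yk + gt i) (x₁ - z) : ℝ) + (1 / (2 * s)) * ‖x₁ - yk‖ ^ 2 := by
    intro i
    have A : f i x₁ ≤ f i yk + (inner ℝ (f' i yk) (x₁ - yk) : ℝ) + L / 2 * ‖x₁ - yk‖ ^ 2 :=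
      descent_lemma (le_of_lt hL) (hf i) (hlip i) x₁ yk
    have A' : L / 2 * ‖x₁ - yk‖ ^ 2 ≤ (1 / (2 * s)) * ‖x₁ - yk‖ ^ 2 := by
      apply mul_le_mul_of_nonneg_right _ (sq_nonneg _)
      rw [div_le_div_iff₀ (by norm_num) (by positivity)]
      have hLs1 : L * s ≤ 1 := (le_div_iff₀ hs0).mp hLs
      nlinarith [hLs1]
    have B : f i yk + (inner ℝ (f' i yk) (z - yk) : ℝ) ≤ f i z :=
      convex_first_order (hf i) (hfconv i) yk z
    have C := hsub i z
    have hinner1 : (inner ℝ (f' i yk) (x₁ - yk) : ℝ) - (inner ℝ (f' i yk) (z - yk) : ℝ)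
        = (inner ℝ (f' i yk) (x₁ - z) : ℝ) := by
      rw [← inner_sub_right]; congr 1; abel
    have hinner2 : (inner ℝ (gt i) (z - x₁) : ℝ) = -(inner ℝ (gt i) (x₁ - z) : ℝ) := by
      rw [← inner_neg_right]; congr 1; abel
    rw [inner_add_left]
    rw [hF, hF]
    rw [hinner2] at C
    linarith
  -- infimum ≤ weighted sum
  have hbdd : BddBelow (Set.range fun i => F i x₁ - F i z) :=
    Set.Finite.bddBelow (Set.finite_range _)
  have hinf_le : ∀ i, (⨅ i : Fin m, (F i x₁ - F i z)) ≤ F i x₁ - F i z :=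
    fun i => ciInf_le hbdd i
  have step1 : (⨅ i : Fin m, (F i x₁ - F i z)) ≤ ∑ i, lam i * (F i x₁ - F i z) := by
    calc (⨅ i : Fin m, (F i x₁ - F i z))
        = ∑ i, lam i * (⨅ i : Fin m, (F i x₁ - F i z)) := by
          rw [← Finset.sum_mul, hlamsum, one_mul]
      _ ≤ ∑ i, lam i * (F i x₁ - F i z) :=
          Finset.sum_le_sum fun i _ => mul_le_mul_of_nonneg_left (hinf_le i) (hlam i)
  have step2 : ∑ i, lam i * (F i x₁ - F i z) ≤
      (inner ℝ (∑ i, lam i • (f' i yk + gt i)) (x₁ - z) : ℝ) + (1 / (2 * s)) * ‖x₁ - yk‖ ^ 2 := by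
    rw [sum_inner]
    have : ∀ i : Fin m, (inner ℝ (lam i • (f' i yk + gt i)) (x₁ - z) : ℝ)
        = lam i * (inner ℝ (f' i yk + gt i) (x₁ - z) : ℝ) := fun i => real_inner_smul_left _ _ _
    calc ∑ i, lam i * (F i x₁ - F i z)
        ≤ ∑ i, lam i * ((inner ℝ (f' i yk + gt i) (x₁ - z) : ℝ) + (1 / (2 * s)) * ‖x₁ - yk‖ ^ 2) :=
          Finset.sum_le_sum fun i _ => mul_le_mul_of_nonneg_left (key i) (hlam i)
      _ = ∑ i, lam i * (inner ℝ (f' i yk + gt i) (x₁ - z) : ℝ)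
            + (∑ i, lam i) * ((1 / (2 * s)) * ‖x₁ - yk‖ ^ 2) := by
          rw [Finset.sum_mul, ← Finset.sum_add_distrib]
          congr 1; ext i; ring
      _ = (∑ i, (inner ℝ (lam i • (f' i yk + gt i)) (x₁ - z) : ℝ))
            + (1 / (2 * s)) * ‖x₁ - yk‖ ^ 2 := by
          rw [hlamsum, one_mul]
          congr 1
          exact (Finset.sum_congr rfl fun i _ => (this i).symm)
  rw [hkkt] at step2
  have hfinal : (inner ℝ ((-(1 / s)) • (x₁ - yk)) (x₁ - z) : ℝ) + (1 / (2 * s)) * ‖x₁ - yk‖ ^ 2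
      = (1 / (2 * s)) * (2 * (inner ℝ (yk - x₁) (yk - z) : ℝ) - ‖x₁ - yk‖ ^ 2) := by
    have e1 : (inner ℝ (x₁ - yk) (x₁ - z) : ℝ)
        = ‖x₁ - yk‖ ^ 2 - (inner ℝ (yk - x₁) (yk - z) : ℝ) := by
      have : x₁ - z = (x₁ - yk) + (yk - z) := by abel
      rw [this, inner_add_right, real_inner_self_eq_norm_sq]
      have : (inner ℝ (x₁ - yk) (yk - z) : ℝ) = -(inner ℝ (yk - x₁) (yk - z) : ℝ) := by
        rw [← inner_neg_left]; congr 1; abel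
      rw [this]; ring
    rw [real_inner_smul_left, e1]
    field_simp
    ring
  rw [hfinal] at step2
  exact le_trans step1 step2
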